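/- Let p : [0,1] → ℝ≥0 be a monotone, continuous, and convex pricing function, and let v : [0,1] → ℝ≥0 be a linear function. Let S ⊂ ℝ be a finite set with v(1) ∈ S, and let p̂ = disc(p,S). Then for every budget b ∈ ℝ≥0, r(p̂|v,b) ≥ r(p|v,b). -/

import Mathlib

noncomputable section

/-- The unit interval `[0,1] ⊆ ℝ`. -/
def unitI : Set ℝ := Set.Icc 0 1

/-- The left derivative of `f` at `x`, as an extended real, with `f'(0) = -∞`. -/
def leftD (f : ℝ → ℝ) (x : ℝ) : EReal :=
  ⨆ δ : {δ : ℝ // 0 < δ ∧ δ ≤ x}, (((f x - f (x - δ.1)) / δ.1 : ℝ) : EReal)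

/-- `ℓ(f|β)`: the rightmost point of `[0,1]` at which the left derivative of `f`
is at most `β`. -/
def ell (f : ℝ → ℝ) (β : ℝ) : ℝ :=
  sSup {x ∈ unitI | leftD f x ≤ (β : EReal)}

/-- The `i`-th smallest element of a finite set `S ⊆ ℝ` (`0`-indexed). -/
def sortedNth (S : Finset ℝ) (i : ℕ) : ℝ := (S.sort (· ≤ ·)).getD i 0

/-- The breakpoints `z_0 = 0, z_i = ℓ(f|α_i) (1 ≤ i ≤ k-1), z_k = 1` of `disc(f,S)`. -/
def discKnot (f : ℝ → ℝ) (S : Finset ℝ) (i : ℕ) : ℝ :=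
  if i = 0 then 0 else if i < S.card then ell f (sortedNth S (i - 1)) else 1

/-- The discretization `disc(f,S) = f 0 + plin(z,α)` of `f` along `S = {α_1 < ⋯ < α_k}`,
where `z_i = ℓ(f|α_i)`; on `[0,1]`, `plin(z,α)(x) = ∑_i α_i (min(x,z_i) - min(x,z_{i-1}))`
with `z_0 = 0` and `z_k = 1`. -/
def disc (f : ℝ → ℝ) (S : Finset ℝ) : ℝ → ℝ := fun x =>
  f 0 + ∑ i ∈ Finset.range S.card,
    sortedNth S i * (min x (discKnot f S (i + 1)) - min x (discKnot f S i))

/-- The affordable set `F(p|b)` (budget in the extended reals, `⊤` = infinite). -/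
def afford (D : Set ℝ) (p : ℝ → ℝ) (b : EReal) : Set ℝ :=
  {x ∈ D | (p x : EReal) ≤ b}

/-- The maximum net utility `u*(p|v,b)`. -/
def uStar (D : Set ℝ) (p v : ℝ → ℝ) (b : EReal) : ℝ :=
  ⨆ x : afford D p b, (v x.1 - p x.1)

/-- The demand set `Dem(p|v,b)`. -/
def demand (D : Set ℝ) (p v : ℝ → ℝ) (b : EReal) : Set ℝ :=
  {x ∈ afford D p b | v x - p x = uStar D p v b}

/-- The revenue `r(p|v,b)`. -/
def revenue (D : Set ℝ) (p v : ℝ → ℝ) (b : EReal) : ℝ :=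
  ⨆ x : demand D p v b, p x.1

def Tset (f : ℝ → ℝ) (β : ℝ) : Set ℝ := {x ∈ unitI | leftD f x ≤ (β : EReal)}

lemma ell_eq (f : ℝ → ℝ) (β : ℝ) : ell f β = sSup (Tset f β) := rfl

lemma leftD_zero (f : ℝ → ℝ) : leftD f 0 = ⊥ := by
  have : IsEmpty {δ : ℝ // 0 < δ ∧ δ ≤ (0:ℝ)} :=
    ⟨fun ⟨δ, h1, h2⟩ => absurd (h1.trans_le h2) (lt_irrefl 0)⟩
  exact iSup_of_empty _

lemma zero_mem_Tset (f : ℝ → ℝ) (β : ℝ) : (0:ℝ) ∈ Tset f β :=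
  ⟨⟨le_refl 0, zero_le_one⟩, by rw [leftD_zero]; exact bot_le⟩

lemma Tset_bdd (f : ℝ → ℝ) (β : ℝ) : BddAbove (Tset f β) :=
  ⟨1, fun x hx => hx.1.2⟩

lemma ell_mem_unitI (f : ℝ → ℝ) (β : ℝ) : ell f β ∈ unitI :=
  ⟨le_csSup (Tset_bdd f β) (zero_mem_Tset f β),
   csSup_le ⟨0, zero_mem_Tset f β⟩ (fun x hx => hx.1.2)⟩

lemma le_ell_of_mem {f : ℝ → ℝ} {β x : ℝ} (hx : x ∈ Tset f β) : x ≤ ell f β :=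
  le_csSup (Tset_bdd f β) hx

lemma ell_mono (f : ℝ → ℝ) : Monotone (ell f) := fun a b hab =>
  csSup_le_csSup (Tset_bdd f b) ⟨0, zero_mem_Tset f a⟩
    (fun x hx => ⟨hx.1, hx.2.trans (EReal.coe_le_coe_iff.mpr hab)⟩)

-- slope ≤ leftD
lemma slope_le_leftD (f : ℝ → ℝ) {a b : ℝ} (ha : 0 ≤ a) (hab : a < b) :
    (((f b - f a) / (b - a) : ℝ) : EReal) ≤ leftD f b := by
  have := le_iSup (fun δ : {δ : ℝ // 0 < δ ∧ δ ≤ b} =>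
    (((f b - f (b - δ.1)) / δ.1 : ℝ) : EReal)) ⟨b - a, by constructor <;> linarith⟩
  simpa [sub_sub_cancel, leftD] using this

lemma sub_le_of_mem_Tset {f : ℝ → ℝ} {β a x : ℝ} (hx : x ∈ Tset f β) (ha : 0 ≤ a)
    (hax : a ≤ x) : f x - f a ≤ β * (x - a) := by
  rcases eq_or_lt_of_le hax with rfl | hax
  · simp
  · have h1 := (slope_le_leftD f ha hax).trans hx.2
    have h2 : (f x - f a) / (x - a) ≤ β := EReal.coe_le_coe_iff.mp h1
    have : 0 < x - a := by linarith
    calc f x - f a = (f x - f a) / (x - a) * (x - a) := by field_simp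
    _ ≤ β * (x - a) := by apply mul_le_mul_of_nonneg_right h2 this.le


section P
variable {p : ℝ → ℝ} (hp0 : p 0 = 0) (hp_mono : MonotoneOn p unitI)
  (hp_cont : ContinuousOn p unitI) (hp_conv : ConvexOn ℝ unitI p)

include hp_mono in
lemma ell_neg {β : ℝ} (hβ : β < 0) : ell p β = 0 := by
  rw [ell_eq]
  refine le_antisymm (csSup_le ⟨0, zero_mem_Tset p β⟩ ?_) (le_csSup (Tset_bdd p β) (zero_mem_Tset p β))
  rintro x ⟨hxI, hxD⟩
  by_contra hx
  push_neg at hx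
  have hx0 : 0 < x := lt_of_le_of_ne hxI.1 (by intro h; exact absurd h.symm (ne_of_gt hx))
  have h1 : (((p x - p 0) / (x - 0) : ℝ) : EReal) ≤ leftD p x := slope_le_leftD p le_rfl hx0
  have h2 : (0:ℝ) ≤ (p x - p 0) / (x - 0) := by
    apply div_nonneg _ (by linarith)
    have := hp_mono (Set.left_mem_Icc.mpr zero_le_one) hxI hx0.le
    linarith
  have h3 : ((β:ℝ) : EReal) < ((0:ℝ) : EReal) := EReal.coe_lt_coe_iff.mpr hβ
  have := (h1.trans hxD).trans_lt (h3.trans_le (EReal.coe_le_coe_iff.mpr h2))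
  exact lt_irrefl _ this

include hp_mono hp_cont hp_conv in
lemma key_le (β : ℝ) {a b : ℝ} (ha : a ∈ unitI) (hb : b ∈ unitI) (hab : a ≤ b)
    (hbe : b ≤ ell p β) : p b - p a ≤ β * (b - a) := by
  rcases eq_or_lt_of_le hab with rfl | hab
  · simp
  rcases lt_or_ge β 0 with hβ | hβ
  · exfalso
    have h0 : ell p β = 0 := ell_neg hp_mono hβ
    have hb0 : b ≤ 0 := hbe.trans_eq h0
    linarith [ha.1]
  by_cases hex : ∃ x ∈ Tset p β, b ≤ x
  · obtain ⟨x, hxT, hbx⟩ := hex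
    rcases eq_or_lt_of_le hbx with rfl | hbx
    · exact sub_le_of_mem_Tset hxT ha.1 hab.le
    · have hs : (p b - p a)/(b-a) ≤ (p x - p a)/(x-a) :=
        hp_conv.secant_mono_aux2 ha hxT.1 hab hbx
      have hx2 : p x - p a ≤ β * (x - a) := sub_le_of_mem_Tset hxT ha.1 (hab.le.trans hbx.le)
      have hxa : 0 < x - a := by linarith
      have hba : 0 < b - a := by linarith
      have hs2 : (p x - p a)/(x-a) ≤ β := by rw [div_le_iff₀ hxa]; linarith
      have := hs.trans hs2
      rw [div_le_iff₀ hba] at this; linarith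
  · push_neg at hex
    refine le_of_forall_pos_le_add (fun ε hε => ?_)
    obtain ⟨δ, hδ, hcont⟩ := Metric.continuousWithinAt_iff.mp (hp_cont b hb) ε hε
    have hlt : max (b - δ) a < sSup (Tset p β) := by
      rw [← ell_eq]
      apply lt_of_lt_of_le _ hbe
      apply max_lt (by linarith) hab
    obtain ⟨x, hxT, hx⟩ := exists_lt_of_lt_csSup ⟨0, zero_mem_Tset p β⟩ hlt
    have hxb : x < b := hex x hxT
    have hxa : a < x := (le_max_right _ _).trans_lt hx
    have hd : dist x b < δ := by
      rw [Real.dist_eq, abs_of_nonpos (by linarith)]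
      have := (le_max_left (b - δ) a).trans_lt hx
      linarith
    have hpc : p b - p x < ε := by
      have := hcont hxT.1 hd
      rw [Real.dist_eq] at this
      have := abs_lt.mp this
      linarith [this.1]
    have h2 : p x - p a ≤ β * (x - a) := sub_le_of_mem_Tset hxT ha.1 hxa.le
    have h3 : β * (x - a) ≤ β * (b - a) := by
      apply mul_le_mul_of_nonneg_left (by linarith) hβ
    linarith

end P

lemma sortedNth_mono {S : Finset ℝ} {i j : ℕ} (hij : i ≤ j) (hj : j < S.card) :
    sortedNth S i ≤ sortedNth S j := by
  unfold sortedNth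
  have hl : (S.sort (· ≤ ·)).length = S.card := Finset.length_sort _
  have hi : i < (S.sort (· ≤ ·)).length := by omega
  have hj' : j < (S.sort (· ≤ ·)).length := by omega
  rw [List.getD_eq_getElem _ _ hi, List.getD_eq_getElem _ _ hj']
  exact (S.pairwise_sort (· ≤ ·)).rel_get_of_le (by exact hij)

lemma exists_sortedNth {S : Finset ℝ} {c : ℝ} (hc : c ∈ S) :
    ∃ j < S.card, sortedNth S j = c := by
  have : c ∈ S.sort (· ≤ ·) := (Finset.mem_sort _).mpr hc
  obtain ⟨⟨j, hj⟩, hget⟩ := List.mem_iff_get.mp this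
  refine ⟨j, by rwa [Finset.length_sort] at hj, ?_⟩
  rw [sortedNth, List.getD_eq_getElem _ _ hj]; exact hget

section K
variable (p : ℝ → ℝ) (S : Finset ℝ)

lemma discKnot_nonneg (i : ℕ) : 0 ≤ discKnot p S i := by
  unfold discKnot
  split_ifs
  · exact le_rfl
  · exact (ell_mem_unitI p _).1
  · exact zero_le_one

lemma discKnot_le_one (i : ℕ) : discKnot p S i ≤ 1 := by
  unfold discKnot
  split_ifs
  · exact zero_le_one
  · exact (ell_mem_unitI p _).2
  · exact le_rfl

lemma discKnot_mono : Monotone (discKnot p S) := by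
  apply monotone_nat_of_le_succ
  intro i
  unfold discKnot
  split_ifs
  all_goals first
    | exact ‹False›.elim
    | rfl | exact le_rfl | exact (ell_mem_unitI p _).1 | exact (ell_mem_unitI p _).2
    | exact zero_le_one | omega
    | exact ell_mono p (sortedNth_mono (by omega) (by omega))

lemma discKnot_zero : discKnot p S 0 = 0 := by simp [discKnot]

lemma discKnot_card (h : S.card ≠ 0) : discKnot p S S.card = 1 := by
  rw [discKnot, if_neg h, if_neg (lt_irrefl _)]

end K

lemma dmin_mono {a b x y : ℝ} (hab : a ≤ b) (hxy : x ≤ y) :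
    0 ≤ (min y b - min y a) - (min x b - min x a) := by
  simp only [min_def]; split_ifs <;> linarith

lemma dzero_left {a b x y : ℝ} (hab : a ≤ b) (hbx : b ≤ x) (hxy : x ≤ y) :
    (min y b - min y a) - (min x b - min x a) = 0 := by
  rw [min_eq_right (hbx.trans hxy), min_eq_right ((hab.trans hbx).trans hxy),
      min_eq_right hbx, min_eq_right (hab.trans hbx)]
  ring

lemma dzero_right {a b x y : ℝ} (hxy : x ≤ y) (hya : y ≤ a) (hab : a ≤ b) :
    (min y b - min y a) - (min x b - min x a) = 0 := by
  rw [min_eq_left (hya.trans hab), min_eq_left hya,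
      min_eq_left ((hxy.trans hya).trans hab), min_eq_left (hxy.trans hya)]
  ring

section D
variable (p : ℝ → ℝ) (S : Finset ℝ) (hS : S.Nonempty)

include hS in
lemma sum_knot_diff {t : ℝ} (ht : t ∈ unitI) :
    ∑ i ∈ Finset.range S.card, (min t (discKnot p S (i+1)) - min t (discKnot p S i)) = t := by
  rw [Finset.sum_range_sub (fun i => min t (discKnot p S i))]
  rw [discKnot_zero, discKnot_card p S (by simpa [Finset.card_eq_zero, ← Finset.not_nonempty_iff_eq_empty] using hS)]
  rw [min_eq_left ht.2, min_eq_right ht.1]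
  ring

lemma disc_diff (x y : ℝ) :
    disc p S y - disc p S x = ∑ i ∈ Finset.range S.card, sortedNth S i *
      ((min y (discKnot p S (i+1)) - min y (discKnot p S i))
        - (min x (discKnot p S (i+1)) - min x (discKnot p S i))) := by
  simp only [disc]
  have : ∀ t : ℝ, p 0 + ∑ i ∈ Finset.range S.card, sortedNth S i *
      (min t (discKnot p S (i+1)) - min t (discKnot p S i)) - p 0 - 0 =
      p 0 + ∑ i ∈ Finset.range S.card, sortedNth S i *
      (min t (discKnot p S (i+1)) - min t (discKnot p S i)) - p 0 - 0 := fun _ => rfl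
  rw [show (∑ i ∈ Finset.range S.card, sortedNth S i *
      ((min y (discKnot p S (i+1)) - min y (discKnot p S i))
        - (min x (discKnot p S (i+1)) - min x (discKnot p S i)))) =
    ∑ i ∈ Finset.range S.card, (sortedNth S i *
      (min y (discKnot p S (i+1)) - min y (discKnot p S i)) - sortedNth S i *
      (min x (discKnot p S (i+1)) - min x (discKnot p S i))) from
    Finset.sum_congr rfl (fun i _ => by ring), Finset.sum_sub_distrib]
  ring

variable {c : ℝ}

include hS in
lemma disc_diff_le (hc : c ∈ S) {x y : ℝ} (hx : x ∈ unitI) (hy : y ∈ unitI) (hxy : x ≤ y)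
    (hye : y ≤ ell p c) : disc p S y - disc p S x ≤ c * (y - x) := by
  obtain ⟨j, hj, hjc⟩ := exists_sortedNth hc
  rw [disc_diff]
  calc ∑ i ∈ Finset.range S.card, sortedNth S i *
      ((min y (discKnot p S (i+1)) - min y (discKnot p S i))
        - (min x (discKnot p S (i+1)) - min x (discKnot p S i)))
      ≤ ∑ i ∈ Finset.range S.card, c *
      ((min y (discKnot p S (i+1)) - min y (discKnot p S i))
        - (min x (discKnot p S (i+1)) - min x (discKnot p S i))) := by
        apply Finset.sum_le_sum
        intro i hi
        have hik := Finset.mem_range.mp hi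
        rcases le_or_gt (sortedNth S i) c with hle | hgt
        · exact mul_le_mul_of_nonneg_right hle
            (dmin_mono (discKnot_mono p S (Nat.le_succ i)) hxy)
        · have hji : j < i := by
            by_contra hcon
            push_neg at hcon
            exact absurd (hjc ▸ sortedNth_mono hcon hj) (not_le.mpr hgt)
          have hzi : y ≤ discKnot p S i := by
            rw [discKnot, if_neg (by omega), if_pos hik]
            refine hye.trans (ell_mono p ?_)
            rw [← hjc]
            exact sortedNth_mono (by omega) (by omega)
          rw [dzero_right hxy hzi (discKnot_mono p S (Nat.le_succ i))]
          simp
    _ = c * ∑ i ∈ Finset.range S.card,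
      ((min y (discKnot p S (i+1)) - min y (discKnot p S i))
        - (min x (discKnot p S (i+1)) - min x (discKnot p S i))) := (Finset.mul_sum _ _ _).symm
    _ = c * (y - x) := by
        rw [Finset.sum_sub_distrib, sum_knot_diff p S hS hy, sum_knot_diff p S hS hx]

include hS in
lemma disc_diff_ge (hc : c ∈ S) {x y : ℝ} (hx : x ∈ unitI) (hy : y ∈ unitI) (hxy : x ≤ y)
    (hxe : ell p c ≤ x) : c * (y - x) ≤ disc p S y - disc p S x := by
  obtain ⟨j, hj, hjc⟩ := exists_sortedNth hc
  rw [disc_diff]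
  calc c * (y - x) = ∑ i ∈ Finset.range S.card, c *
      ((min y (discKnot p S (i+1)) - min y (discKnot p S i))
        - (min x (discKnot p S (i+1)) - min x (discKnot p S i))) := by
        rw [← Finset.mul_sum, Finset.sum_sub_distrib, sum_knot_diff p S hS hy,
          sum_knot_diff p S hS hx]
    _ ≤ _ := by
        apply Finset.sum_le_sum
        intro i hi
        have hik := Finset.mem_range.mp hi
        rcases le_or_gt c (sortedNth S i) with hle | hgt
        · exact mul_le_mul_of_nonneg_right hle
            (dmin_mono (discKnot_mono p S (Nat.le_succ i)) hxy)
        · have hik1 : i + 1 < S.card := by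
            rcases Nat.lt_or_ge (i+1) S.card with h | h
            · exact h
            · exfalso
              have : c ≤ sortedNth S i := hjc ▸ sortedNth_mono (by omega) hik
              linarith
          have hij : i ≤ j := by
            by_contra hcon
            push_neg at hcon
            exact absurd (hjc ▸ sortedNth_mono hcon.le hik) (not_le.mpr hgt)
          have hzi : discKnot p S (i+1) ≤ x := by
            rw [discKnot, if_neg (by omega), if_pos hik1]
            simp only [Nat.add_sub_cancel]
            refine le_trans (ell_mono p ?_) hxe
            rw [← hjc]
            exact sortedNth_mono hij hj
          rw [dzero_left (discKnot_mono p S (Nat.le_succ i)) hzi hxy]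
          simp

include hS in
lemma disc_mono' (hc : c ∈ S) (hc0 : 0 ≤ c)
    (hell_neg : ∀ β : ℝ, β < 0 → ell p β = 0)
    {x y : ℝ} (hx : x ∈ unitI) (hy : y ∈ unitI) (hxy : x ≤ y) :
    disc p S x ≤ disc p S y := by
  obtain ⟨j, hj, hjc⟩ := exists_sortedNth hc
  have h : 0 ≤ disc p S y - disc p S x := by
    rw [disc_diff]
    apply Finset.sum_nonneg
    intro i hi
    have hik := Finset.mem_range.mp hi
    rcases le_or_gt 0 (sortedNth S i) with hle | hgt
    · exact mul_nonneg hle (dmin_mono (discKnot_mono p S (Nat.le_succ i)) hxy)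
    · have hik1 : i + 1 < S.card := by
        rcases Nat.lt_or_ge (i+1) S.card with h | h
        · exact h
        · exfalso
          have : c ≤ sortedNth S i := hjc ▸ sortedNth_mono (by omega) hik
          linarith
      have hzi : discKnot p S (i+1) ≤ x := by
        rw [discKnot, if_neg (by omega), if_pos hik1]
        simp only [Nat.add_sub_cancel]
        rw [hell_neg _ hgt]
        exact hx.1
      rw [dzero_left (discKnot_mono p S (Nat.le_succ i)) hzi hxy]
      simp
  linarith

include hS in
lemma disc_lipschitz {x y : ℝ} (hx : x ∈ unitI) (hy : y ∈ unitI) (hxy : x ≤ y) :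
    disc p S y - disc p S x ≤ max (sortedNth S (S.card - 1)) 0 * (y - x) := by
  rw [disc_diff]
  calc ∑ i ∈ Finset.range S.card, sortedNth S i *
      ((min y (discKnot p S (i+1)) - min y (discKnot p S i))
        - (min x (discKnot p S (i+1)) - min x (discKnot p S i)))
      ≤ ∑ i ∈ Finset.range S.card, max (sortedNth S (S.card - 1)) 0 *
      ((min y (discKnot p S (i+1)) - min y (discKnot p S i))
        - (min x (discKnot p S (i+1)) - min x (discKnot p S i))) := by
        apply Finset.sum_le_sum
        intro i hi
        have hik := Finset.mem_range.mp hi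
        refine mul_le_mul_of_nonneg_right ?_
          (dmin_mono (discKnot_mono p S (Nat.le_succ i)) hxy)
        exact le_max_of_le_left (sortedNth_mono (by omega) (by omega))
    _ = _ := by
        rw [← Finset.mul_sum, Finset.sum_sub_distrib, sum_knot_diff p S hS hy,
          sum_knot_diff p S hS hx]

lemma disc_zero (hz : ∀ i, 0 ≤ discKnot p S i) : disc p S 0 = p 0 := by
  simp only [disc]
  have : ∀ i ∈ Finset.range S.card, sortedNth S i *
      (min 0 (discKnot p S (i+1)) - min 0 (discKnot p S i)) = 0 := by
    intro i _
    rw [min_eq_left (hz (i+1)), min_eq_left (hz i)]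
    ring
  rw [Finset.sum_congr rfl this]
  simp

include hS in
lemma p_le_disc
    (hkey : ∀ (β : ℝ) (a b : ℝ), a ∈ unitI → b ∈ unitI → a ≤ b → b ≤ ell p β →
      p b - p a ≤ β * (b - a))
    {x : ℝ} (hx : x ∈ unitI) (hxe : x ≤ ell p (sortedNth S (S.card - 1))) :
    p x ≤ disc p S x := by
  have hcard : S.card ≠ 0 := by
    simpa [Finset.card_eq_zero, ← Finset.not_nonempty_iff_eq_empty] using hS
  have htel : ∑ i ∈ Finset.range S.card,
      (p (min x (discKnot p S (i+1))) - p (min x (discKnot p S i))) = p x - p 0 := by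
    rw [Finset.sum_range_sub (fun i => p (min x (discKnot p S i))), discKnot_zero,
      discKnot_card p S hcard, min_eq_left hx.2, min_eq_right hx.1]
  have hterm : ∀ i ∈ Finset.range S.card,
      p (min x (discKnot p S (i+1))) - p (min x (discKnot p S i)) ≤
      sortedNth S i * (min x (discKnot p S (i+1)) - min x (discKnot p S i)) := by
    intro i hi
    have hik := Finset.mem_range.mp hi
    have hmI : ∀ j, min x (discKnot p S j) ∈ unitI := fun j =>
      ⟨le_min hx.1 (discKnot_nonneg p S j), (min_le_left _ _).trans hx.2⟩
    refine hkey (sortedNth S i) _ _ (hmI i) (hmI (i+1))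
      (min_le_min le_rfl (discKnot_mono p S (Nat.le_succ i))) ?_
    rcases Nat.lt_or_ge (i+1) S.card with h | h
    · refine (min_le_right _ _).trans ?_
      rw [discKnot, if_neg (by omega), if_pos h]
      simp only [Nat.add_sub_cancel]
      exact le_rfl
    · have hieq : i = S.card - 1 := by omega
      refine (min_le_left _ _).trans ?_
      rw [hieq]
      exact hxe
  have := Finset.sum_le_sum hterm
  rw [htel] at this
  simp only [disc]
  linarith

end D

/-- Let `p : [0,1] → ℝ≥0` be a monotone, continuous, convex pricing
function and `v : [0,1] → ℝ≥0` linear. Let `S ⊆ ℝ` be a finite set with `v 1 ∈ S`, and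
`p̂ = disc(p,S)`. Then for every budget `b ≥ 0`, `r(p̂|v,b) ≥ r(p|v,b)`. -/
theorem stmt8 (p : ℝ → ℝ) (hp_nonneg : ∀ x ∈ unitI, 0 ≤ p x) (hp0 : p 0 = 0)
    (hp_mono : MonotoneOn p unitI) (hp_cont : ContinuousOn p unitI)
    (hp_conv : ConvexOn ℝ unitI p)
    (v : ℝ → ℝ) (hv_lin : ∀ x, v x = v 1 * x) (hv1 : 0 ≤ v 1)
    (S : Finset ℝ) (hvS : v 1 ∈ S) (b : ℝ) (hb : 0 ≤ b) :
    revenue unitI (disc p S) v (b : EReal) ≥ revenue unitI p v (b : EReal) := by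
  set c : ℝ := v 1 with hc_def
  set q : ℝ → ℝ := disc p S with hq_def
  have hS : S.Nonempty := ⟨c, hvS⟩
  set xs : ℝ := ell p c with hxs_def
  have hxsI : xs ∈ unitI := ell_mem_unitI p c
  have h0I : (0:ℝ) ∈ unitI := ⟨le_refl 0, zero_le_one⟩
  have h1I : (1:ℝ) ∈ unitI := ⟨zero_le_one, le_refl 1⟩
  have hq0 : q 0 = 0 := by rw [hq_def, disc_zero p S (discKnot_nonneg p S), hp0]
  have hqmono : ∀ x ∈ unitI, ∀ y ∈ unitI, x ≤ y → q x ≤ q y :=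
    fun x hx y hy hxy => disc_mono' p S hS hvS hv1 (fun β hβ => ell_neg hp_mono hβ) hx hy hxy
  -- q xs ≥ p xs
  have hcmax : c ≤ sortedNth S (S.card - 1) := by
    obtain ⟨j, hj, hjc⟩ := exists_sortedNth hvS
    exact hjc ▸ sortedNth_mono (by omega) (by omega)
  have hpq : p xs ≤ q xs :=
    p_le_disc p S hS (fun β a b' ha hb' hab hbe => key_le hp_mono hp_cont hp_conv β ha hb' hab hbe) hxsI ((le_refl xs).trans (ell_mono p hcmax))
  -- Step A : revenue p ≤ min b (p xs)
  have hA : revenue unitI p v (b : EReal) ≤ min b (p xs) := by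
    have hub : ∀ x ∈ afford unitI p (b:EReal), v x - p x ≤ c := by
      intro x hx
      rw [hv_lin x]
      have h1 : 0 ≤ p x := hp_nonneg x hx.1
      nlinarith [hx.1.2, hx.1.1]
    have hbdd : BddAbove (Set.range fun x : afford unitI p (b:EReal) => v x.1 - p x.1) :=
      ⟨c, by rintro _ ⟨x, rfl⟩; exact hub x.1 x.2⟩
    have hdem : ∀ y ∈ demand unitI p v (b:EReal), y ≤ xs := by
      intro y hy
      by_contra hcon
      push_neg at hcon
      have hyI : y ∈ unitI := hy.1.1
      have hltD : (c : EReal) < leftD p y := by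
        by_contra h
        push_neg at h
        have hyle : y ≤ ell p c := by
          rw [ell_eq p c]; exact le_csSup (Tset_bdd p c) ⟨hyI, h⟩
        exact absurd hyle (not_le.mpr hcon)
      rw [leftD, lt_iSup_iff] at hltD
      obtain ⟨⟨δ, hδ0, hδy⟩, hslope⟩ := hltD
      have hsl : c < (p y - p (y - δ)) / δ := EReal.coe_lt_coe_iff.mp hslope
      have hpy : c * δ < p y - p (y - δ) := (lt_div_iff₀ hδ0).mp hsl
      have haI : y - δ ∈ unitI := ⟨by linarith, by linarith [hyI.2]⟩
      have hpa_le : p (y - δ) ≤ p y := hp_mono haI hyI (by linarith)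
      have hafford : y - δ ∈ afford unitI p (b:EReal) :=
        ⟨haI, le_trans (EReal.coe_le_coe_iff.mpr hpa_le) hy.1.2⟩
      have hua : v (y - δ) - p (y - δ) ≤ uStar unitI p v (b:EReal) :=
        le_ciSup hbdd (⟨y - δ, hafford⟩ : afford unitI p (b:EReal))
      have huy : v y - p y = uStar unitI p v (b:EReal) := hy.2
      rw [hv_lin (y - δ)] at hua
      rw [hv_lin y] at huy
      nlinarith
    by_cases hne : Nonempty (demand unitI p v (b:EReal))
    · refine ciSup_le fun y => le_min (EReal.coe_le_coe_iff.mp y.2.1.2)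
        (hp_mono y.2.1.1 hxsI (hdem y.1 y.2))
    · rw [not_nonempty_iff] at hne
      rw [revenue, Real.iSup_of_isEmpty]
      exact le_min hb (hp_nonneg xs hxsI)
  -- Step C : min b (q xs) ≤ revenue q
  have hC : min b (q xs) ≤ revenue unitI q v (b : EReal) := by
    have hrev_ge : ∀ t : ℝ, t ∈ afford unitI q (b:EReal) →
        (∀ x ∈ afford unitI q (b:EReal), v x - q x ≤ v t - q t) →
        q t ≤ revenue unitI q v (b:EReal) := by
      intro t ht hmax
      haveI : Nonempty (afford unitI q (b:EReal)) := ⟨⟨t, ht⟩⟩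
      have hbdd : BddAbove (Set.range fun x : afford unitI q (b:EReal) => v x.1 - q x.1) :=
        ⟨v t - q t, by rintro _ ⟨x, rfl⟩; exact hmax x.1 x.2⟩
      have huS : uStar unitI q v (b:EReal) = v t - q t :=
        le_antisymm (ciSup_le fun x => hmax x.1 x.2)
          (le_ciSup hbdd (⟨t, ht⟩ : afford unitI q (b:EReal)))
      have htd : t ∈ demand unitI q v (b:EReal) := ⟨ht, huS.symm⟩
      have hbdd2 : BddAbove (Set.range fun x : demand unitI q v (b:EReal) => q x.1) :=
        ⟨b, by rintro _ ⟨x, rfl⟩; exact EReal.coe_le_coe_iff.mp x.2.1.2⟩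
      exact le_ciSup hbdd2 (⟨t, htd⟩ : demand unitI q v (b:EReal))
    rcases le_or_gt (q xs) b with hcase | hcase
    · have ht : xs ∈ afford unitI q (b:EReal) := ⟨hxsI, EReal.coe_le_coe_iff.mpr hcase⟩
      have hmax : ∀ x ∈ afford unitI q (b:EReal), v x - q x ≤ v xs - q xs := by
        intro x hx
        rw [hv_lin x, hv_lin xs]
        rcases le_total x xs with hxx | hxx
        · have := disc_diff_le p S hS hvS hx.1 hxsI hxx (le_refl xs)
          rw [← hq_def] at this
          nlinarith
        · have := disc_diff_ge p S hS hvS hxsI hx.1 hxx (le_refl xs)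
          rw [← hq_def] at this
          nlinarith
      exact le_trans (min_le_right _ _) (hrev_ge xs ht hmax)
    · set M := max (sortedNth S (S.card - 1)) 0 with hM
      have hM0 : 0 ≤ M := le_max_right _ _
      have hM1 : (0:ℝ) < M + 1 := by linarith
      set A := {x ∈ unitI | q x ≤ b} with hA_def
      have hA0 : (0:ℝ) ∈ A := ⟨h0I, by rw [hq0]; exact hb⟩
      have hAne : A.Nonempty := ⟨0, hA0⟩
      have hAbdd : BddAbove A := ⟨1, fun x hx => hx.1.2⟩
      set t := sSup A with ht_def
      have htI : t ∈ unitI := ⟨le_csSup hAbdd hA0, csSup_le hAne fun x hx => hx.1.2⟩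
      have htxs : t ≤ xs := by
        apply csSup_le hAne
        intro x hx
        by_contra hcon
        push_neg at hcon
        have := hqmono xs hxsI x hx.1 hcon.le
        have := hx.2
        linarith
      have hqt_le : q t ≤ b := by
        refine le_of_forall_pos_le_add fun ε hε => ?_
        have hεM : 0 < ε / (M + 1) := div_pos hε hM1
        have hlt : t - ε / (M + 1) < sSup A := by rw [← ht_def]; linarith
        obtain ⟨x, hxA, hx⟩ := exists_lt_of_lt_csSup hAne hlt
        have hxt : x ≤ t := le_csSup hAbdd hxA
        have hlip := disc_lipschitz p S hS hxA.1 htI hxt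
        rw [← hq_def, ← hM] at hlip
        have h1 : t - x ≤ ε / (M+1) := by linarith
        have h2 : M * (t - x) ≤ M * (ε / (M+1)) := mul_le_mul_of_nonneg_left h1 hM0
        have h3 : M * (ε / (M+1)) ≤ ε := by
          rw [mul_div_assoc', div_le_iff₀ hM1]
          nlinarith
        have := hxA.2
        linarith
      have ht1 : t < 1 := by
        by_contra hcon
        push_neg at hcon
        have hteq : t = 1 := le_antisymm htI.2 hcon
        have h1 : q xs ≤ q t := hqmono xs hxsI t htI (by rw [hteq]; exact hxsI.2)
        linarith
      have hqt_ge : b ≤ q t := by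
        by_contra hcon
        push_neg at hcon
        have hpos : 0 < (b - q t)/(M+1) := div_pos (by linarith) hM1
        set y := min 1 (t + (b - q t)/(M+1)) with hy_def
        have hyt : t < y := lt_min ht1 (by linarith)
        have hyI : y ∈ unitI := ⟨le_trans htI.1 hyt.le, min_le_left _ _⟩
        have hqy : q y ≤ b := by
          have hlip := disc_lipschitz p S hS htI hyI hyt.le
          rw [← hq_def, ← hM] at hlip
          have hyb : y - t ≤ (b - q t)/(M+1) := by
            have := min_le_right 1 (t + (b - q t)/(M+1))
            rw [← hy_def] at this
            linarith
          have h2 : M * (y - t) ≤ M * ((b - q t)/(M+1)) := mul_le_mul_of_nonneg_left hyb hM0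
          have h3 : M * ((b - q t)/(M+1)) ≤ b - q t := by
            rw [mul_div_assoc', div_le_iff₀ hM1]
            nlinarith
          linarith
        exact absurd (le_csSup hAbdd (⟨hyI, hqy⟩ : y ∈ A)) (not_le.mpr hyt)
      have hqtb : q t = b := le_antisymm hqt_le hqt_ge
      have ht : t ∈ afford unitI q (b:EReal) := ⟨htI, EReal.coe_le_coe_iff.mpr hqt_le⟩
      have hmax : ∀ x ∈ afford unitI q (b:EReal), v x - q x ≤ v t - q t := by
        intro x hx
        have hxt : x ≤ t := le_csSup hAbdd ⟨hx.1, EReal.coe_le_coe_iff.mp hx.2⟩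
        rw [hv_lin x, hv_lin t]
        have := disc_diff_le p S hS hvS hx.1 htI hxt htxs
        rw [← hq_def] at this
        nlinarith
      have := hrev_ge t ht hmax
      rw [hqtb] at this
      exact le_trans (min_le_left _ _) this
  have hB : min b (p xs) ≤ min b (q xs) := min_le_min le_rfl hpq
  exact le_trans hA (le_trans hB hC)


end
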